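/- Second-interval incidence decomposition under the alternative (Appendix D). Assume Consistency, Exposure necessity, the Exclusion restriction, Treatment exchangeability, Positivity, Exposure exchangeability, and Extended exposure exchangeability, together with 0 < P(E1[a]=1) < 1 and P(E1[a]=1, Y1[a,1]=0) > 0 for the given a ∈ {0,1}. Then E[ΔY2 | A=a] = P(Y2[a,1]=1) · P(E2[a,0]=1 | E1[a]=0) · P(E1[a]=0) + P(Y2[a,1]=1, Y1[a,1]=0) · P(E2[a,1]=1 | E1[a]=1, Y1[a,1]=0) · P(E1[a]=1). -/

import Mathlib

open MeasureTheory ProbabilityTheory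
open scoped ProbabilityTheory

section AuxSecondInterval

variable {Ω : Type*} [MeasurableSpace Ω]

lemma aux_indep_inter (μ : Measure Ω) {A : Ω → ℝ} {V : Ω → Fin 18 → ℝ}
    (h : IndepFun A V μ) (a : ℝ) {S : Set (Fin 18 → ℝ)} (hS : MeasurableSet S) :
    μ (A ⁻¹' {a} ∩ V ⁻¹' S) = μ (A ⁻¹' {a}) * μ (V ⁻¹' S) :=
  h.measure_inter_preimage_eq_mul {a} S (measurableSet_singleton a) hS

lemma aux_fact (m : Measure Ω) [IsProbabilityMeasure m]
    {X1 X2 Z : Ω → ℝ} (hX2 : Measurable X2) (x : ℝ)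
    (h2 : IndepFun X2 Z m) (h1 : IndepFun X1 Z (m[|X2 ⁻¹' {1}])) :
    m (X1 ⁻¹' {x} ∩ X2 ⁻¹' {1} ∩ Z ⁻¹' {1}) =
      m (X1 ⁻¹' {x} ∩ X2 ⁻¹' {1}) * m (Z ⁻¹' {1}) := by
  set C : Set Ω := X2 ⁻¹' {1} with hCdef
  have hmC : MeasurableSet C := hX2 (measurableSet_singleton 1)
  by_cases hc : m C = 0
  · rw [measure_mono_null (Set.inter_subset_left.trans Set.inter_subset_right) hc,
      measure_mono_null Set.inter_subset_right hc, zero_mul]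
  · have hfin : m C ≠ ⊤ := measure_ne_top m C
    have key1 : (m[|C]) (X1 ⁻¹' {x} ∩ Z ⁻¹' {1}) =
        (m[|C]) (X1 ⁻¹' {x}) * (m[|C]) (Z ⁻¹' {1}) :=
      h1.measure_inter_preimage_eq_mul {x} {1} (measurableSet_singleton _)
        (measurableSet_singleton _)
    have key2 : m (C ∩ Z ⁻¹' {1}) = m C * m (Z ⁻¹' {1}) :=
      h2.measure_inter_preimage_eq_mul {1} {1} (measurableSet_singleton _)
        (measurableSet_singleton _)
    rw [cond_apply hmC, cond_apply hmC, cond_apply hmC] at key1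
    have hset1 : X1 ⁻¹' {x} ∩ C ∩ Z ⁻¹' {1} = C ∩ (X1 ⁻¹' {x} ∩ Z ⁻¹' {1}) := by
      ext ω; simp only [Set.mem_inter_iff]; tauto
    have hset2 : X1 ⁻¹' {x} ∩ C = C ∩ X1 ⁻¹' {x} := Set.inter_comm _ _
    rw [hset1, hset2]
    -- pass to real numbers
    have hcR : (m C).toReal ≠ 0 := by
      simp [ENNReal.toReal_eq_zero_iff, hc, hfin]
    rw [← ENNReal.toReal_eq_toReal_iff' (measure_ne_top _ _)
      (ENNReal.mul_ne_top (measure_ne_top _ _) (measure_ne_top _ _))]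
    have key1R := congrArg ENNReal.toReal key1
    have key2R := congrArg ENNReal.toReal key2
    rw [ENNReal.toReal_mul, ENNReal.toReal_mul, ENNReal.toReal_mul, ENNReal.toReal_mul,
      ENNReal.toReal_inv] at key1R
    rw [ENNReal.toReal_mul] at key2R
    rw [ENNReal.toReal_mul]
    set cR := (m C).toReal
    set u := (m (C ∩ (X1 ⁻¹' {x} ∩ Z ⁻¹' {1}))).toReal
    set p := (m (C ∩ X1 ⁻¹' {x})).toReal
    set q := (m (C ∩ Z ⁻¹' {1})).toReal
    set z := (m (Z ⁻¹' {1})).toReal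
    -- key1R : cR⁻¹ * u = cR⁻¹ * p * (cR⁻¹ * q), key2R : q = cR * z ⊢ u = p * z
    have hu : u = cR * (cR⁻¹ * u) := by field_simp
    rw [hu, key1R, key2R]
    field_simp

end AuxSecondInterval

/-- Second-interval incidence decomposition under the alternative (Appendix D). -/
theorem second_interval_incidence_decomposition
    {Ω : Type*} [MeasurableSpace Ω] (μ : Measure Ω) [IsProbabilityMeasure μ]
    (A E1 E2 DY1 DY2 : Ω → ℝ)
    (E1p : ℝ → Ω → ℝ) (E2p Y1p Y2p Wp : ℝ → ℝ → Ω → ℝ)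
    (hAm : Measurable A) (hE1m : Measurable E1) (hE2m : Measurable E2)
    (hDY1m : Measurable DY1) (hDY2m : Measurable DY2)
    (hE1pm : ∀ a ∈ ({0, 1} : Set ℝ), Measurable (E1p a))
    (hE2pm : ∀ a ∈ ({0, 1} : Set ℝ), ∀ e1 ∈ ({0, 1} : Set ℝ), Measurable (E2p a e1))
    (hY1pm : ∀ a ∈ ({0, 1} : Set ℝ), ∀ e1 ∈ ({0, 1} : Set ℝ), Measurable (Y1p a e1))
    (hY2pm : ∀ a ∈ ({0, 1} : Set ℝ), ∀ e2 ∈ ({0, 1} : Set ℝ), Measurable (Y2p a e2))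
    (hWpm : ∀ a ∈ ({0, 1} : Set ℝ), ∀ e1 ∈ ({0, 1} : Set ℝ), Measurable (Wp a e1))
    (hAr : ∀ ω, A ω = 0 ∨ A ω = 1) (hE1r : ∀ ω, E1 ω = 0 ∨ E1 ω = 1)
    (hE2r : ∀ ω, E2 ω = 0 ∨ E2 ω = 1)
    (hDY1r : ∀ ω, DY1 ω = 0 ∨ DY1 ω = 1) (hDY2r : ∀ ω, DY2 ω = 0 ∨ DY2 ω = 1)
    (hE1pr : ∀ a ∈ ({0, 1} : Set ℝ), ∀ ω, E1p a ω = 0 ∨ E1p a ω = 1)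
    (hE2pr : ∀ a ∈ ({0, 1} : Set ℝ), ∀ e1 ∈ ({0, 1} : Set ℝ), ∀ ω,
      E2p a e1 ω = 0 ∨ E2p a e1 ω = 1)
    (hY1pr : ∀ a ∈ ({0, 1} : Set ℝ), ∀ e1 ∈ ({0, 1} : Set ℝ), ∀ ω,
      Y1p a e1 ω = 0 ∨ Y1p a e1 ω = 1)
    (hY2pr : ∀ a ∈ ({0, 1} : Set ℝ), ∀ e2 ∈ ({0, 1} : Set ℝ), ∀ ω,
      Y2p a e2 ω = 0 ∨ Y2p a e2 ω = 1)
    (hWpr : ∀ a ∈ ({0, 1} : Set ℝ), ∀ e1 ∈ ({0, 1} : Set ℝ), ∀ ω,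
      Wp a e1 ω = 0 ∨ Wp a e1 ω = 1)
    (hmono : ∀ ω, DY1 ω = 1 → DY2 ω = 0)
    -- Consistency
    (hconsE1 : ∀ a ∈ ({0, 1} : Set ℝ), ∀ᵐ ω ∂μ, A ω = a → E1 ω = E1p a ω)
    (hconsY1 : ∀ a ∈ ({0, 1} : Set ℝ), ∀ e1 ∈ ({0, 1} : Set ℝ),
      ∀ᵐ ω ∂μ, A ω = a → E1 ω = e1 → DY1 ω = Y1p a e1 ω)
    (hconsE2 : ∀ a ∈ ({0, 1} : Set ℝ), ∀ e1 ∈ ({0, 1} : Set ℝ),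
      ∀ᵐ ω ∂μ, A ω = a → E1 ω = e1 → E2 ω = E2p a e1 ω)
    (hconsY2 : ∀ a ∈ ({0, 1} : Set ℝ), ∀ e2 ∈ ({0, 1} : Set ℝ),
      ∀ᵐ ω ∂μ, A ω = a → E1 ω = 0 → E2 ω = e2 → DY2 ω = Y2p a e2 ω)
    (hconsW : ∀ a ∈ ({0, 1} : Set ℝ), ∀ e1 ∈ ({0, 1} : Set ℝ),
      ∀ᵐ ω ∂μ, A ω = a → E1 ω = e1 → DY1 ω = 0 → E2 ω = 1 → DY2 ω = Wp a e1 ω)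
    -- Exposure necessity
    (hnecY1 : ∀ a ∈ ({0, 1} : Set ℝ), ∀ᵐ ω ∂μ, Y1p a 0 ω = 0)
    (hnecY2 : ∀ a ∈ ({0, 1} : Set ℝ), ∀ᵐ ω ∂μ, Y2p a 0 ω = 0)
    (hnecE2 : ∀ᵐ ω ∂μ, E2 ω = 0 → DY2 ω = 0)
    -- Exclusion restriction
    (hexcl : ∀ a ∈ ({0, 1} : Set ℝ), ∀ᵐ ω ∂μ, Wp a 1 ω = Y2p a 1 ω ∧ Wp a 0 ω = Y2p a 1 ω)
    -- Treatment exchangeability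
    (hexch : IndepFun A (fun ω => ![E1p 0 ω, E1p 1 ω,
      E2p 0 0 ω, E2p 0 1 ω, E2p 1 0 ω, E2p 1 1 ω,
      Y1p 0 0 ω, Y1p 0 1 ω, Y1p 1 0 ω, Y1p 1 1 ω,
      Y2p 0 0 ω, Y2p 0 1 ω, Y2p 1 0 ω, Y2p 1 1 ω,
      Wp 0 0 ω, Wp 0 1 ω, Wp 1 0 ω, Wp 1 1 ω]) μ)
    -- Positivity
    (hpos : 0 < (μ {ω | A ω = 1}).toReal ∧ (μ {ω | A ω = 1}).toReal < 1)
    -- Exposure exchangeability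
    (heeY1 : ∀ a ∈ ({0, 1} : Set ℝ), ∀ e1 ∈ ({0, 1} : Set ℝ), IndepFun (E1p a) (Y1p a e1) μ)
    (heeY2cond : ∀ a ∈ ({0, 1} : Set ℝ), ∀ e2 ∈ ({0, 1} : Set ℝ), ∀ e ∈ ({0, 1} : Set ℝ),
      IndepFun (E1p a) (Y2p a e2) (μ[|{ω | E2p a 0 ω = e}]))
    (heeE2 : ∀ a ∈ ({0, 1} : Set ℝ), ∀ e2 ∈ ({0, 1} : Set ℝ), IndepFun (E2p a 0) (Y2p a e2) μ)
    -- Extended exposure exchangeability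
    (hextee1 : ∀ a ∈ ({0, 1} : Set ℝ), ∀ e ∈ ({0, 1} : Set ℝ),
      IndepFun (E1p a) (Wp a 1) (μ[|{ω | Y1p a 1 ω = 0 ∧ E2p a 1 ω = e}]))
    (hextee2 : ∀ a ∈ ({0, 1} : Set ℝ),
      IndepFun (E2p a 1) (Wp a 1) (μ[|{ω | Y1p a 1 ω = 0}]))
    (a : ℝ) (ha : a ∈ ({0, 1} : Set ℝ))
    -- Nondegeneracy
    (hE1pos : 0 < (μ {ω | E1p a ω = 1}).toReal)
    (hE1lt : (μ {ω | E1p a ω = 1}).toReal < 1)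
    (hE1Y1 : 0 < (μ {ω | E1p a ω = 1 ∧ Y1p a 1 ω = 0}).toReal) :
    (∫ ω, DY2 ω ∂(μ[|{ω | A ω = a}])) =
      (μ {ω | Y2p a 1 ω = 1}).toReal *
        ((μ[|{ω | E1p a ω = 0}]) {ω | E2p a 0 ω = 1}).toReal *
        (μ {ω | E1p a ω = 0}).toReal +
      (μ {ω | Y2p a 1 ω = 1 ∧ Y1p a 1 ω = 0}).toReal *
        ((μ[|{ω | E1p a ω = 1 ∧ Y1p a 1 ω = 0}]) {ω | E2p a 1 ω = 1}).toReal *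
        (μ {ω | E1p a ω = 1}).toReal := by
  have h0 : (0:ℝ) ∈ ({0, 1} : Set ℝ) := by norm_num
  have h1 : (1:ℝ) ∈ ({0, 1} : Set ℝ) := by norm_num
  -- abbreviations
  set sA := {ω | A ω = a} with hsAdef
  set Ys := {ω | Y2p a 1 ω = 1} with hYsdef
  set E0 := {ω | E1p a ω = 0} with hE0def
  set E1s := {ω | E1p a ω = 1} with hE1sdef
  set F0 := {ω | E2p a 0 ω = 1} with hF0def
  set F1 := {ω | E2p a 1 ω = 1} with hF1def
  set Bs := {ω | Y1p a 1 ω = 0} with hBsdef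
  set Ws := {ω | Wp a 1 ω = 1} with hWsdef
  set Ds := {ω | E1p a ω = 1 ∧ Y1p a 1 ω = 0} with hDsdef
  set YBs := {ω | Y2p a 1 ω = 1 ∧ Y1p a 1 ω = 0} with hYBsdef
  -- measurability
  have mE1p : Measurable (E1p a) := hE1pm a ha
  have mE20 : Measurable (E2p a 0) := hE2pm a ha 0 h0
  have mE21 : Measurable (E2p a 1) := hE2pm a ha 1 h1
  have mY11 : Measurable (Y1p a 1) := hY1pm a ha 1 h1
  have mY21 : Measurable (Y2p a 1) := hY2pm a ha 1 h1
  have mW1 : Measurable (Wp a 1) := hWpm a ha 1 h1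
  have hmA : MeasurableSet sA := hAm (measurableSet_singleton a)
  have hmYs : MeasurableSet Ys := mY21 (measurableSet_singleton 1)
  have hmE0 : MeasurableSet E0 := mE1p (measurableSet_singleton 0)
  have hmE1s : MeasurableSet E1s := mE1p (measurableSet_singleton 1)
  have hmF0 : MeasurableSet F0 := mE20 (measurableSet_singleton 1)
  have hmF1 : MeasurableSet F1 := mE21 (measurableSet_singleton 1)
  have hmB : MeasurableSet Bs := mY11 (measurableSet_singleton 0)
  have hmW : MeasurableSet Ws := mW1 (measurableSet_singleton 1)
  have hmD : MeasurableSet Ds := hmE1s.inter hmB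
  set T2 := E0 ∩ F0 ∩ Ys with hT2def
  set T3 := E1s ∩ Bs ∩ F1 ∩ Ws with hT3def
  have mT2 : MeasurableSet T2 := (hmE0.inter hmF0).inter hmYs
  have mT3 : MeasurableSet T3 := ((hmE1s.inter hmB).inter hmF1).inter hmW
  -- nonzero / nontop facts
  have hE1ne : μ E1s ≠ 0 := (ENNReal.toReal_pos_iff.mp hE1pos).1.ne'
  have hDne : μ Ds ≠ 0 := (ENNReal.toReal_pos_iff.mp hE1Y1).1.ne'
  have hBne : μ Bs ≠ 0 := by
    intro hb
    exact hDne (measure_mono_null (fun ω hω => hω.2) hb)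
  have hE0ne : μ E0 ≠ 0 := by
    have hcompl : E0 = E1sᶜ := by
      ext ω
      simp only [hE0def, hE1sdef, Set.mem_setOf_eq, Set.mem_compl_iff]
      constructor
      · intro h h'; rw [h'] at h; norm_num at h
      · intro h; exact (hE1pr a ha ω).resolve_right h
    have hlt : μ E1s < 1 := by
      have := ENNReal.toReal_lt_toReal (measure_ne_top μ E1s) (ENNReal.one_ne_top)
      rw [ENNReal.toReal_one] at this
      exact this.mp hE1lt
    rw [hcompl, prob_compl_eq_one_sub hmE1s]
    simp only [ne_eq, tsub_eq_zero_iff_le, not_le]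
    exact hlt
  have hAne : μ sA ≠ 0 := by
    rcases ha with ha' | ha'
    · subst ha'
      have hcompl : sA = {ω | A ω = 1}ᶜ := by
        ext ω
        simp only [hsAdef, Set.mem_setOf_eq, Set.mem_compl_iff]
        constructor
        · intro h h'; rw [h'] at h; norm_num at h
        · intro h; exact (hAr ω).resolve_right h
      have hmA1 : MeasurableSet {ω | A ω = 1} := hAm (measurableSet_singleton 1)
      have hlt : μ {ω | A ω = 1} < 1 := by
        have := ENNReal.toReal_lt_toReal (measure_ne_top μ {ω | A ω = 1}) (ENNReal.one_ne_top)
        rw [ENNReal.toReal_one] at this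
        exact this.mp hpos.2
      rw [hcompl, prob_compl_eq_one_sub hmA1]
      simp only [ne_eq, tsub_eq_zero_iff_le, not_le]
      exact hlt
    · have ha'' : a = 1 := ha'
      subst ha''
      exact (ENNReal.toReal_pos_iff.mp hpos.1).1.ne'
  -- real versions
  have haR : (μ sA).toReal ≠ 0 := by
    simp [ENNReal.toReal_eq_zero_iff, hAne, measure_ne_top]
  have hbR : (μ Bs).toReal ≠ 0 := by
    simp [ENNReal.toReal_eq_zero_iff, hBne, measure_ne_top]
  have he0R : (μ E0).toReal ≠ 0 := by
    simp [ENNReal.toReal_eq_zero_iff, hE0ne, measure_ne_top]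
  have he1R : (μ E1s).toReal ≠ 0 := by
    simp [ENNReal.toReal_eq_zero_iff, hE1ne, measure_ne_top]
  -- Step 1: the conditional integral as a ratio of measures
  have hmDY2 : MeasurableSet {ω | DY2 ω = 1} := hDY2m (measurableSet_singleton 1)
  have hint : ∫ ω, DY2 ω ∂(μ[|sA]) =
      ((μ sA).toReal)⁻¹ * (μ (sA ∩ {ω | DY2 ω = 1})).toReal := by
    have hres : ∫ ω, DY2 ω ∂(μ.restrict sA) = (μ.restrict sA {ω | DY2 ω = 1}).toReal := by
      rw [← Measure.real_def, ← MeasureTheory.integral_indicator_one hmDY2]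
      refine integral_congr_ae (Filter.Eventually.of_forall fun ω => ?_)
      rcases hDY2r ω with h | h
      · simp [Set.indicator_apply, Set.mem_setOf_eq, h]
      · simp [Set.indicator_apply, Set.mem_setOf_eq, h]
    rw [ProbabilityTheory.cond, integral_smul_measure, hres,
      Measure.restrict_apply hmDY2, Set.inter_comm, smul_eq_mul, ENNReal.toReal_inv]
  -- Step 2: a.e. decomposition of the event
  have hae : (sA ∩ {ω | DY2 ω = 1} : Set Ω) =ᵐ[μ] ((sA ∩ T2) ∪ (sA ∩ T3) : Set Ω) := by
    rw [Filter.eventuallyEq_set]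
    filter_upwards [hconsE1 a ha, hconsY1 a ha 1 h1, hconsE2 a ha 0 h0, hconsE2 a ha 1 h1,
      hconsY2 a ha 1 h1, hconsW a ha 1 h1, hnecE2] with ω hc1 hc2 hc30 hc31 hc4 hc5 hc6
    simp only [hsAdef, hT2def, hT3def, hE0def, hE1sdef, hF0def, hF1def, hBsdef, hWsdef,
      hYsdef, Set.mem_inter_iff, Set.mem_union, Set.mem_setOf_eq]
    constructor
    · rintro ⟨hA, hD⟩
      have hE2 : E2 ω = 1 := by
        rcases hE2r ω with h | h
        · rw [hc6 h] at hD; norm_num at hD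
        · exact h
      have hD1 : DY1 ω = 0 := by
        rcases hDY1r ω with h | h
        · exact h
        · rw [hmono ω h] at hD; norm_num at hD
      rcases hE1r ω with hE1 | hE1
      · exact Or.inl ⟨hA, ⟨(hc1 hA).symm.trans hE1, (hc30 hA hE1).symm.trans hE2⟩,
          (hc4 hA hE1 hE2).symm.trans hD⟩
      · exact Or.inr ⟨hA, ⟨⟨(hc1 hA).symm.trans hE1, (hc2 hA hE1).symm.trans hD1⟩,
          (hc31 hA hE1).symm.trans hE2⟩, (hc5 hA hE1 hD1 hE2).symm.trans hD⟩
    · rintro (⟨hA, ⟨hx0, hx2⟩, hy⟩ | ⟨hA, ⟨⟨hx1, hy1⟩, hx2⟩, hw⟩)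
      · have hE1 : E1 ω = 0 := (hc1 hA).trans hx0
        have hE2 : E2 ω = 1 := (hc30 hA hE1).trans hx2
        exact ⟨hA, (hc4 hA hE1 hE2).trans hy⟩
      · have hE1 : E1 ω = 1 := (hc1 hA).trans hx1
        have hD1 : DY1 ω = 0 := (hc2 hA hE1).trans hy1
        have hE2 : E2 ω = 1 := (hc31 hA hE1).trans hx2
        exact ⟨hA, (hc5 hA hE1 hD1 hE2).trans hw⟩
  have hdisj : Disjoint (sA ∩ T2) (sA ∩ T3) := by
    rw [Set.disjoint_left]
    rintro ω ⟨-, ⟨he0, -⟩, -⟩ ⟨-, ⟨⟨he1, -⟩, -⟩, -⟩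
    have e0 : E1p a ω = 0 := he0
    have e1 : E1p a ω = 1 := he1
    rw [e0] at e1; norm_num at e1
  -- Step 3: treatment exchangeability
  have mpi : ∀ (i : Fin 18) (x : ℝ), MeasurableSet ((fun v : Fin 18 → ℝ => v i) ⁻¹' {x}) :=
    fun i x => measurable_pi_apply i (measurableSet_singleton x)
  have hexT : ∀ T : Set Ω,
      (∃ S : Set (Fin 18 → ℝ), MeasurableSet S ∧
        T = (fun ω => ![E1p 0 ω, E1p 1 ω, E2p 0 0 ω, E2p 0 1 ω, E2p 1 0 ω, E2p 1 1 ω,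
          Y1p 0 0 ω, Y1p 0 1 ω, Y1p 1 0 ω, Y1p 1 1 ω, Y2p 0 0 ω, Y2p 0 1 ω, Y2p 1 0 ω,
          Y2p 1 1 ω, Wp 0 0 ω, Wp 0 1 ω, Wp 1 0 ω, Wp 1 1 ω]) ⁻¹' S) →
      μ (sA ∩ T) = μ sA * μ T := by
    rintro T ⟨S, hS, rfl⟩
    exact aux_indep_inter μ hexch a hS
  have hexT2 : μ (sA ∩ T2) = μ sA * μ T2 := by
    apply hexT
    rcases ha with ha' | ha'
    · subst ha'
      exact ⟨(fun v => v 0) ⁻¹' {0} ∩ (fun v => v 2) ⁻¹' {1} ∩ (fun v => v 11) ⁻¹' {1},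
        ((mpi 0 0).inter (mpi 2 1)).inter (mpi 11 1), rfl⟩
    · have ha'' : a = 1 := ha'
      subst ha''
      exact ⟨(fun v => v 1) ⁻¹' {0} ∩ (fun v => v 4) ⁻¹' {1} ∩ (fun v => v 13) ⁻¹' {1},
        ((mpi 1 0).inter (mpi 4 1)).inter (mpi 13 1), rfl⟩
  have hexT3 : μ (sA ∩ T3) = μ sA * μ T3 := by
    apply hexT
    rcases ha with ha' | ha'
    · subst ha'
      exact ⟨(fun v => v 0) ⁻¹' {1} ∩ (fun v => v 7) ⁻¹' {0} ∩ (fun v => v 3) ⁻¹' {1} ∩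
          (fun v => v 15) ⁻¹' {1},
        (((mpi 0 1).inter (mpi 7 0)).inter (mpi 3 1)).inter (mpi 15 1), rfl⟩
    · have ha'' : a = 1 := ha'
      subst ha''
      exact ⟨(fun v => v 1) ⁻¹' {1} ∩ (fun v => v 9) ⁻¹' {0} ∩ (fun v => v 5) ⁻¹' {1} ∩
          (fun v => v 17) ⁻¹' {1},
        (((mpi 1 1).inter (mpi 9 0)).inter (mpi 5 1)).inter (mpi 17 1), rfl⟩
  have hsplit : μ (sA ∩ {ω | DY2 ω = 1}) = μ sA * μ T2 + μ sA * μ T3 := by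
    rw [measure_congr hae, measure_union hdisj (hmA.inter mT3), hexT2, hexT3]
  -- Step 4: factorizations via exposure exchangeability
  have hterm2 : μ T2 = μ (E0 ∩ F0) * μ Ys :=
    aux_fact μ mE20 0 (heeE2 a ha 1 h1) (heeY2cond a ha 1 h1 1 h1)
  haveI hnuP : IsProbabilityMeasure (μ[|Bs]) := cond_isProbabilityMeasure hBne
  have hext1' : IndepFun (E1p a) (Wp a 1) ((μ[|Bs])[|F1]) := by
    rw [cond_cond_eq_cond_inter hmB hmF1 μ]
    exact hextee1 a ha 1 h1
  have hfact3 : (μ[|Bs]) (E1s ∩ F1 ∩ Ws) = (μ[|Bs]) (E1s ∩ F1) * (μ[|Bs]) Ws :=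
    aux_fact (μ[|Bs]) mE21 1 (hextee2 a ha) hext1'
  have hcondB : ∀ s : Set Ω, μ (Bs ∩ s) = μ Bs * (μ[|Bs]) s := by
    intro s
    rw [cond_apply hmB, ← mul_assoc, ENNReal.mul_inv_cancel hBne (measure_ne_top μ Bs), one_mul]
  have hT3B : μ T3 = μ (Bs ∩ (E1s ∩ F1 ∩ Ws)) := by
    congr 1
    rw [hT3def]
    ext ω; simp only [Set.mem_inter_iff]; tauto
  have hDsplitm : μ Ds = μ E1s * μ Bs :=
    (heeY1 a ha 1 h1).measure_inter_preimage_eq_mul {1} {0}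
      (measurableSet_singleton _) (measurableSet_singleton _)
  have hDF : μ (Ds ∩ F1) = μ (Bs ∩ (E1s ∩ F1)) := by
    congr 1
    ext ω
    simp only [hDsdef, hE1sdef, hBsdef, hF1def, Set.mem_inter_iff, Set.mem_setOf_eq]
    tauto
  have hYW : μ YBs = μ (Bs ∩ Ws) := by
    apply measure_congr
    rw [Filter.eventuallyEq_set]
    filter_upwards [hexcl a ha] with ω hw
    simp only [hYBsdef, hBsdef, hWsdef, Set.mem_setOf_eq, Set.mem_inter_iff, hw.1]
    tauto
  -- Step 5: assemble, in real numbers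
  have t2R : (μ T2).toReal = (μ (E0 ∩ F0)).toReal * (μ Ys).toReal := by
    rw [hterm2, ENNReal.toReal_mul]
  have t3R : (μ T3).toReal = (μ Bs).toReal *
      (((μ Bs).toReal)⁻¹ * (μ (Bs ∩ (E1s ∩ F1))).toReal) *
      (((μ Bs).toReal)⁻¹ * (μ (Bs ∩ Ws)).toReal) := by
    rw [hT3B, hcondB, hfact3, cond_apply hmB μ (E1s ∩ F1), cond_apply hmB μ Ws]
    simp only [ENNReal.toReal_mul, ENNReal.toReal_inv]
    ring
  have c0R : ((μ[|E0]) F0).toReal = ((μ E0).toReal)⁻¹ * (μ (E0 ∩ F0)).toReal := by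
    rw [cond_apply hmE0 μ F0]
    simp only [ENNReal.toReal_mul, ENNReal.toReal_inv]
  have cDR : ((μ[|Ds]) F1).toReal =
      ((μ E1s).toReal * (μ Bs).toReal)⁻¹ * (μ (Bs ∩ (E1s ∩ F1))).toReal := by
    rw [cond_apply hmD μ F1, hDsplitm, hDF]
    simp only [ENNReal.toReal_mul, ENNReal.toReal_inv]
  have yR : (μ YBs).toReal = (μ (Bs ∩ Ws)).toReal := by rw [hYW]
  rw [hint, hsplit, ENNReal.toReal_add
      (ENNReal.mul_ne_top (measure_ne_top _ _) (measure_ne_top _ _))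
      (ENNReal.mul_ne_top (measure_ne_top _ _) (measure_ne_top _ _)),
    ENNReal.toReal_mul, ENNReal.toReal_mul, t2R, t3R, c0R, cDR, yR]
  field_simp
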